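/- For every n×n complex matrix A of rank r, there exists a realization: a complex vector space H of dimension 2n−r, linearly independent elements α_1^∨, …, α_n^∨ ∈ H, and linearly independent linear functionals α_1, …, α_n ∈ H* such that α_i(α_j^∨) = A_{ji} for all i, j. -/

import Mathlib

open Module LinearMap

/-- every `n × n` complex matrix of rank `r` admits a realization on a
complex vector space of dimension `2n - r`. -/
theorem stmt_7 {n r : ℕ} (A : Matrix (Fin n) (Fin n) ℂ) (hr : A.rank = r) :
    ∃ (αv : Fin n → (Fin (2 * n - r) → ℂ))
      (α : Fin n → ((Fin (2 * n - r) → ℂ) →ₗ[ℂ] ℂ)),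
      LinearIndependent ℂ αv ∧ LinearIndependent ℂ α ∧
        ∀ i j, α i (αv j) = A j i := by
  classical
  have hrn : r ≤ n := by
    have h := A.rank_le_card_width
    simp at h
    omega
  set K : Submodule ℂ (Fin n → ℂ) := LinearMap.ker A.mulVecLin with hK
  have hKdim : finrank ℂ K = n - r := by
    have h2 : finrank ℂ (LinearMap.range A.mulVecLin) = r := by
      rw [← hr]; rfl
    have h1 : r + finrank ℂ K = n := by
      rw [← h2]
      simpa using A.mulVecLin.finrank_range_add_finrank_ker
    omega
  obtain ⟨p, hp⟩ := Submodule.exists_isCompl K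
  set π : (Fin n → ℂ) →ₗ[ℂ] K := Submodule.linearProjOfIsCompl K p hp with hπ
  set eK : K ≃ₗ[ℂ] Module.Dual ℂ K := (Module.finBasis ℂ K).toDualEquiv with heK
  set Φ : (Fin n → ℂ) →ₗ[ℂ] Module.Dual ℂ K := eK.toLinearMap ∘ₗ π with hΦ
  set colF : Fin n → ((Fin n → ℂ) →ₗ[ℂ] ℂ) :=
    fun i => ∑ j, A j i • LinearMap.proj j with hcolF
  have hcol : ∀ i j, colF i (Pi.single j 1) = A j i := by
    intro i j
    simp [hcolF, LinearMap.sum_apply, Pi.single_apply, Finset.sum_ite_eq]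
  have hcol' : ∀ i (x : Fin n → ℂ), colF i x = ∑ j, A j i * x j := by
    intro i x
    simp [hcolF, LinearMap.sum_apply, smul_eq_mul]
  set αv₀ : Fin n → ((Fin n → ℂ) × K) := fun j => (Pi.single j 1, 0) with hαv₀
  set α₀ : Fin n → (((Fin n → ℂ) × K) →ₗ[ℂ] ℂ) :=
    fun i => (colF i).comp (LinearMap.fst ℂ _ _) +
      (Φ (Pi.single i 1)).comp (LinearMap.snd ℂ _ _) with hα₀
  -- linear independence of αv₀
  have hliv : LinearIndependent ℂ αv₀ := by
    rw [Fintype.linearIndependent_iff]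
    intro c hc j
    have := congrFun (congrArg Prod.fst hc) j
    simpa [αv₀, Prod.fst_sum, Finset.sum_apply, Pi.single_apply, Finset.sum_ite_eq'] using this
  -- linear independence of α₀
  have hlia : LinearIndependent ℂ α₀ := by
    rw [Fintype.linearIndependent_iff]
    intro c hc i
    have hc1 : ∀ x : Fin n → ℂ, ∑ k, c k * colF k x = 0 := by
      intro x
      have := LinearMap.congr_fun hc (x, (0 : K))
      simpa [α₀, LinearMap.sum_apply, smul_eq_mul] using this
    have hcK : A.mulVec c = 0 := by
      funext j
      have := hc1 (Pi.single j 1)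
      simp only [hcol] at this
      rw [Matrix.mulVec]
      simpa [dotProduct, mul_comm] using this
    have hcmem : c ∈ K := by
      simp [hK, LinearMap.mem_ker, Matrix.mulVecLin_apply, hcK]
    have hc2 : ∀ k : K, Φ c k = 0 := by
      intro k
      have h := LinearMap.congr_fun hc ((0 : Fin n → ℂ), k)
      have h' : ∑ m, c m • (Φ (Pi.single m 1)) k = 0 := by
        simpa [α₀, LinearMap.sum_apply, smul_eq_mul] using h
      have hcsum : c = ∑ m, Pi.single m (c m) := (Finset.univ_sum_single c).symm
      have hone : ∀ m : Fin n, (Pi.single m (c m) : Fin n → ℂ) = c m • (Pi.single m (1:ℂ) : Fin n → ℂ) := by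
        intro m
        funext t
        by_cases h : m = t <;> simp [Pi.single_apply, h]
      calc Φ c k = ∑ m, (Φ (Pi.single m (c m))) k := by
            conv_lhs => rw [hcsum]
            rw [map_sum, LinearMap.sum_apply]
        _ = ∑ m, c m • (Φ (Pi.single m 1)) k := by
            refine Finset.sum_congr rfl fun m _ => ?_
            rw [hone m, map_smul, LinearMap.smul_apply]
        _ = 0 := h'
    have hΦc : Φ c = 0 := by
      ext k; exact hc2 k
    have hπc : π c = 0 := by
      have h0 : eK (π c) = 0 := hΦc
      exact (LinearEquiv.map_eq_zero_iff eK).mp h0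
    have : (⟨c, hcmem⟩ : K) = 0 := by
      rw [← Submodule.linearProjOfIsCompl_apply_left hp ⟨c, hcmem⟩]
      exact hπc
    have hcz : c = 0 := by
      simpa using congrArg Subtype.val this
    simp [hcz]
  -- pairing
  have hpair : ∀ i j, α₀ i (αv₀ j) = A j i := by
    intro i j
    simp [α₀, αv₀, hcol]
  -- transport to Fin (2n - r) → ℂ
  have hdim : finrank ℂ ((Fin n → ℂ) × K) = finrank ℂ (Fin (2 * n - r) → ℂ) := by
    simp [Module.finrank_prod, hKdim, Module.finrank_pi]
    omega
  obtain ⟨E⟩ := FiniteDimensional.nonempty_linearEquiv_of_finrank_eq hdim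
  refine ⟨fun j => E (αv₀ j), fun i => (α₀ i).comp E.symm.toLinearMap, ?_, ?_, ?_⟩
  · exact hliv.map' E.toLinearMap E.ker
  · have := hlia.map' E.symm.dualMap.toLinearMap E.symm.dualMap.ker
    exact this
  · intro i j
    simp [hpair]
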